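/- Let G be a finite group, g ∈ G, and let 𝔐_g be the set of maximal (proper) subgroups M of G with g^G ∩ M ≠ ∅. Assume that for every M ∈ 𝔐_g there exists m ∈ M with g^G ∩ M ⊆ m^M ⊆ g^G. If the conjugacy class g^G is of type D, then there exist N ∈ 𝔐_g and n ∈ N such that the conjugacy class n^N is of type D. -/

import Mathlib

/-- A subset `O` of a group is of type D if it contains `r`, `s` with
`(rs)² ≠ (sr)²` that are not conjugate in the subgroup `⟨r, s⟩`. -/
def IsTypeD {G : Type*} [Group G] (O : Set G) : Prop :=
  ∃ r ∈ O, ∃ s ∈ O, (r * s) ^ 2 ≠ (s * r) ^ 2 ∧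
    ∀ h ∈ Subgroup.closure ({r, s} : Set G), h * r * h⁻¹ ≠ s

/-- Breuer's lemma: let `G` be a finite group and `g ∈ G`. Suppose that for
every maximal subgroup `M` meeting the class `g^G` there is `m ∈ M` with
`g^G ∩ M ⊆ m^M ⊆ g^G`. If `g^G` is of type D, then some maximal subgroup `N`
meeting `g^G` has a conjugacy class `n^N` of type D. -/
theorem breuer_lemma {G : Type*} [Group G] [Finite G] (g : G)
    (hyp : ∀ M : Subgroup G, IsCoatom M →
      ({x : G | IsConj g x} ∩ (M : Set G)).Nonempty →
      ∃ m : M, {x : G | IsConj g x} ∩ (M : Set G) ⊆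
          Subtype.val '' {x : M | IsConj m x} ∧
        Subtype.val '' {x : M | IsConj m x} ⊆ {x : G | IsConj g x})
    (hD : IsTypeD {x : G | IsConj g x}) :
    ∃ N : Subgroup G, IsCoatom N ∧
      ({x : G | IsConj g x} ∩ (N : Set G)).Nonempty ∧
      ∃ n : N, IsTypeD {x : N | IsConj n x} := by
  obtain ⟨r, hr, s, hs, hsq, hconj⟩ := hD
  -- the subgroup generated by r, s is proper
  set H : Subgroup G := Subgroup.closure ({r, s} : Set G) with hH
  have hrs : IsConj r s := (hr.symm).trans hs
  have hHne : H ≠ ⊤ := by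
    intro htop
    obtain ⟨c, hc⟩ := hrs
    exact hconj c (htop ▸ Subgroup.mem_top c) (by
      have := hc.eq
      rw [this]; group)
  -- find a coatom above H
  obtain ⟨N, hN, hHN⟩ := (eq_top_or_exists_le_coatom (α := Subgroup G) H).resolve_left hHne
  have hrN : r ∈ N := hHN (Subgroup.subset_closure (by simp))
  have hsN : s ∈ N := hHN (Subgroup.subset_closure (by simp))
  have hne : ({x : G | IsConj g x} ∩ (N : Set G)).Nonempty := ⟨r, hr, hrN⟩
  obtain ⟨m, hm1, _⟩ := hyp N hN hne
  refine ⟨N, hN, hne, m, ?_⟩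
  obtain ⟨r', hr'm, hr'⟩ := hm1 ⟨hr, hrN⟩
  obtain ⟨s', hs'm, hs'⟩ := hm1 ⟨hs, hsN⟩
  refine ⟨r', hr'm, s', hs'm, ?_, ?_⟩
  · intro h
    apply hsq
    have := congrArg (Subtype.val) h
    simpa [hr', hs'] using this
  · intro h hh heq
    have hmem : (h : G) ∈ Subgroup.closure ({r, s} : Set G) := by
      have : (h : G) ∈ (Subgroup.closure ({r', s'} : Set N)).map N.subtype :=
        ⟨h, hh, rfl⟩
      rw [MonoidHom.map_closure] at this
      simpa [Set.image_pair, hr', hs'] using this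
    apply hconj (h : G) hmem
    have := congrArg (Subtype.val) heq
    simpa [hr', hs'] using this
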